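/- Let F be a field with char F ≠ 2, δ ∈ F with δ ≠ ±1, and suppose x² − 2δx + 1 has its roots in F. Let s, t ∈ V be elements spanning the two 1-dimensional nilpotent subalgebras of 𝔖(δ) (so s·s = 0 = t·t), scaled so that b(s,t) = 1/8. Then an element w ∈ 𝔖(δ) satisfies w·w = w if and only if w = 0, or w = 1, or w = ξs + (1/2)·1 + ξ⁻¹t for some ξ ∈ F \ {0}. -/

import Mathlib

namespace JordanHalf

variable {F : Type*} [Field F]

/-- The multiplication of the spin factor `𝔖(δ)` with respect to the basis
`1 = ![1,0,0]`, `u = ![0,1,0]`, `v = ![0,0,1]`, where the bilinear form on `V = ⟨u,v⟩`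
satisfies `b(u,u) = 1 = b(v,v)` and `b(u,v) = δ`. -/
def SmulFun (δ : F) (x y : Fin 3 → F) : Fin 3 → F :=
  ![x 0 * y 0 + x 1 * y 1 + x 2 * y 2 + δ * (x 1 * y 2 + x 2 * y 1),
    x 0 * y 1 + y 0 * x 1,
    x 0 * y 2 + y 0 * x 2]

end JordanHalf

open JordanHalf

/-- **Lemma (nilpotent basis, part (b)).** Suppose `char F ≠ 2`, `δ ≠ ±1`, and
`x² − 2δx + 1` has its roots in `F`.  Let `s, t ∈ V` span the two 1-dimensional
nilpotent subalgebras of `𝔖(δ)` (so `s⬝s = 0 = t⬝t`), scaled so that `b(s,t) = 1/8`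
(for `s, t ∈ V` the value `b(s,t)` is the identity component of `s⬝t`).  Then the
idempotents of `𝔖(δ)` are exactly `0`, `1` and the elements `ξs + ½·1 + ξ⁻¹t`,
`ξ ∈ F \ {0}`. -/
theorem spin_idempotents {F : Type*} [Field F] (hchar : (2 : F) ≠ 0) (δ : F)
    (hδ1 : δ ≠ 1) (hδ2 : δ ≠ -1) (hroot : ∃ ζ : F, ζ ^ 2 - 2 * δ * ζ + 1 = 0)
    (s t : Fin 3 → F) (hs0 : s 0 = 0) (ht0 : t 0 = 0)
    (hss : SmulFun δ s s = 0) (htt : SmulFun δ t t = 0)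
    (hind : LinearIndependent F ![s, t])
    (hst : SmulFun δ s t 0 = (8⁻¹ : F)) :
    ∀ w : Fin 3 → F, SmulFun δ w w = w ↔
      w = 0 ∨ w = ![1, 0, 0] ∨
        ∃ ξ : F, ξ ≠ 0 ∧ w = ξ • s + (2⁻¹ : F) • ![1, 0, 0] + ξ⁻¹ • t := by
  have hvec : ∀ x y : Fin 3 → F, x 0 = y 0 → x 1 = y 1 → x 2 = y 2 → x = y := by
    intro x y h0 h1 h2; funext i; fin_cases i
    · exact h0
    · exact h1
    · exact h2
  have qs : s 1 * s 1 + s 2 * s 2 + δ * (s 1 * s 2 + s 2 * s 1) = 0 := by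
    have h := congrFun hss 0
    simp only [SmulFun, Matrix.cons_val_zero, Pi.zero_apply, hs0] at h
    linear_combination h
  have qt : t 1 * t 1 + t 2 * t 2 + δ * (t 1 * t 2 + t 2 * t 1) = 0 := by
    have h := congrFun htt 0
    simp only [SmulFun, Matrix.cons_val_zero, Pi.zero_apply, ht0] at h
    linear_combination h
  have bst : s 1 * t 1 + s 2 * t 2 + δ * (s 1 * t 2 + s 2 * t 1) = 8⁻¹ := by
    have h := hst
    simp only [SmulFun, Matrix.cons_val_zero, hs0] at h
    linear_combination h
  rw [LinearIndependent.pair_iff] at hind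
  have hD : s 1 * t 2 - s 2 * t 1 ≠ 0 := by
    intro hD
    by_cases h1 : s 1 = 0 ∧ t 1 = 0
    · by_cases h2 : s 2 = 0 ∧ t 2 = 0
      · exact one_ne_zero (hind 1 0 (hvec _ _
          (by simp [hs0, ht0]) (by simp [h1.1, h1.2]) (by simp [h2.1, h2.2]))).1
      · have h := hind (t 2) (-(s 2)) (hvec _ _
          (by simp only [Pi.add_apply, Pi.smul_apply, smul_eq_mul, Pi.zero_apply, hs0, ht0]; ring)
          (by simp only [Pi.add_apply, Pi.smul_apply, smul_eq_mul, Pi.zero_apply, h1.1, h1.2]; ring)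
          (by simp only [Pi.add_apply, Pi.smul_apply, smul_eq_mul, Pi.zero_apply]; ring))
        exact h2 ⟨neg_eq_zero.mp h.2, h.1⟩
    · have h := hind (t 1) (-(s 1)) (hvec _ _
        (by simp only [Pi.add_apply, Pi.smul_apply, smul_eq_mul, Pi.zero_apply, hs0, ht0]; ring)
        (by simp only [Pi.add_apply, Pi.smul_apply, smul_eq_mul, Pi.zero_apply]; ring)
        (by simp only [Pi.add_apply, Pi.smul_apply, smul_eq_mul, Pi.zero_apply]
            linear_combination -hD))
      exact h1 ⟨neg_eq_zero.mp h.2, h.1⟩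
  intro w
  constructor
  · intro hw
    have E0 := congrFun hw 0
    have E1 := congrFun hw 1
    have E2 := congrFun hw 2
    simp only [SmulFun, Matrix.cons_val_zero, Matrix.cons_val_one, Matrix.head_cons,
      Matrix.cons_val_two, Matrix.tail_cons] at E0 E1 E2
    by_cases h12 : w 1 = 0 ∧ w 2 = 0
    · have hq : w 0 * (w 0 - 1) = 0 := by
        rw [h12.1, h12.2] at E0; linear_combination E0
      rcases mul_eq_zero.mp hq with h | h
      · left; exact hvec _ _ (by simpa using h) (by simpa using h12.1) (by simpa using h12.2)
      · right; left
        exact hvec _ _ (by simpa using sub_eq_zero.mp h) (by simpa using h12.1)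
          (by simpa using h12.2)
    · have h2w0 : 2 * w 0 = 1 := by
        rcases not_and_or.mp h12 with h | h
        · have hh : (2 * w 0 - 1) * w 1 = 0 := by linear_combination E1
          rcases mul_eq_zero.mp hh with hh | hh
          · linear_combination hh
          · exact absurd hh h
        · have hh : (2 * w 0 - 1) * w 2 = 0 := by linear_combination E2
          rcases mul_eq_zero.mp hh with hh | hh
          · linear_combination hh
          · exact absurd hh h
      set D := s 1 * t 2 - s 2 * t 1 with hDdef
      set a := (w 1 * t 2 - w 2 * t 1) / D with ha
      set b := (s 1 * w 2 - s 2 * w 1) / D with hb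
      have hW1 : w 1 = a * s 1 + b * t 1 := by
        rw [ha, hb]; field_simp; ring
      have hW2 : w 2 = a * s 2 + b * t 2 := by
        rw [ha, hb]; field_simp; ring
      have hab : a * b = 1 := by
        have h8 : (8 : F) ≠ 0 := by
          intro h8
          have : (2:F) * (2 * 2) = 0 := by linear_combination h8
          rcases mul_eq_zero.mp this with h | h
          · exact hchar h
          · rcases mul_eq_zero.mp h with h | h <;> exact hchar h
        rw [hW1, hW2] at E0
        have h8' : (8:F) * 8⁻¹ = 1 := mul_inv_cancel₀ h8
        linear_combination 4 * E0 - 4 * a^2 * qs - 4 * b^2 * qt - 8 * a * b * bst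
          - a * b * h8' - (2 * w 0 - 1) * h2w0
      have ha0 : a ≠ 0 := by
        intro h; rw [h, zero_mul] at hab; exact one_ne_zero hab.symm
      right; right
      refine ⟨a, ha0, ?_⟩
      have hbinv : b = a⁻¹ := by
        field_simp
        linear_combination hab
      apply hvec
      · simp only [Pi.add_apply, Pi.smul_apply, smul_eq_mul, Matrix.cons_val_zero, hs0, ht0]
        have : w 0 = 2⁻¹ := eq_inv_of_mul_eq_one_right (by linear_combination h2w0)
        rw [this]; ring
      · simp only [Pi.add_apply, Pi.smul_apply, smul_eq_mul, Matrix.cons_val_one, Matrix.head_cons,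
          Matrix.cons_val_zero]
        rw [hW1, hbinv]; ring
      · simp only [Pi.add_apply, Pi.smul_apply, smul_eq_mul, Matrix.cons_val_two, Matrix.tail_cons,
          Matrix.head_cons]
        rw [hW2, hbinv]; ring
  · rintro (rfl | rfl | ⟨ξ, hξ, rfl⟩)
    · apply hvec <;> simp [SmulFun]
    · apply hvec <;> simp [SmulFun]
    · have hξ' : ξ * ξ⁻¹ = 1 := mul_inv_cancel₀ hξ
      have h2 : (2:F) * 2⁻¹ = 1 := mul_inv_cancel₀ hchar
      apply hvec
      · simp only [SmulFun, Matrix.cons_val_zero, Pi.add_apply, Pi.smul_apply, smul_eq_mul,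
          Matrix.cons_val_one, Matrix.head_cons, Matrix.cons_val_two, Matrix.tail_cons,
          hs0, ht0]
        have h8ne : (8:F) ≠ 0 := by
          intro h8
          have : (2:F) * (2 * 2) = 0 := by linear_combination h8
          rcases mul_eq_zero.mp this with h | h
          · exact hchar h
          · rcases mul_eq_zero.mp h with h | h <;> exact hchar h
        have key : (2⁻¹:F) * 2⁻¹ + 2 * (ξ * ξ⁻¹) * 8⁻¹ = (2⁻¹:F) := by
          field_simp
          ring
        linear_combination ξ^2 * qs + (ξ⁻¹)^2 * qt + 2 * (ξ * ξ⁻¹) * bst + key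
      · simp only [SmulFun, Matrix.cons_val_zero, Pi.add_apply, Pi.smul_apply, smul_eq_mul,
          Matrix.cons_val_one, Matrix.head_cons, hs0, ht0]
        linear_combination (ξ * s 1 + ξ⁻¹ * t 1) * h2
      · simp only [SmulFun, Matrix.cons_val_zero, Pi.add_apply, Pi.smul_apply, smul_eq_mul,
          Matrix.cons_val_two, Matrix.tail_cons, Matrix.head_cons, hs0, ht0]
        linear_combination (ξ * s 2 + ξ⁻¹ * t 2) * h2
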